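/- Let (X, ‖·‖, ≼) be a normal partially ordered Banach space and D a nonempty closed inductive subset of X. Let T be an isotone and δ-compact set-valued mapping from D to nonempty closed bounded subsets of D. Suppose there exist points x₀ ∈ D and x₁ ∈ T x₀ with x₀ ≼ x₁. Then the fixed point set 𝔉(T) = {x ∈ D : x ∈ T x} is a nonempty chain-complete subset of D, and T has an ≼-maximal fixed point. (Theorem 3.6 (a), (a')) -/

import Mathlib

open Filter Metric Set Topology

/-- The partial order on a Banach space induced by a cone `K`: `x ≼ y` iff `y - x ∈ K`. -/
def coneLe {X : Type*} [NormedAddCommGroup X] (K : Set X) (x y : X) : Prop := y - x ∈ K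

section Aux

variable {X : Type*} [NormedAddCommGroup X]

lemma coneLe_refl (K : Set X) (hK0 : (0 : X) ∈ K) (x : X) : coneLe K x x := by
  simpa [coneLe] using hK0

lemma coneLe_trans (K : Set X) (hKadd : ∀ x ∈ K, ∀ y ∈ K, x + y ∈ K) {x y z : X}
    (h1 : coneLe K x y) (h2 : coneLe K y z) : coneLe K x z := by
  have := hKadd _ h2 _ h1
  simpa [coneLe, sub_add_sub_cancel] using this

/-- A limit of a sequence `v n ∈ T (u n)` with `u → s`, `v → s` is a fixed point. -/
lemma limFix (D : Set X) (hDclosed : IsClosed D) (T : X → Set X)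
    (hTval : ∀ x ∈ D, (T x).Nonempty ∧ IsClosed (T x) ∧ Bornology.IsBounded (T x) ∧ T x ⊆ D)
    (hTcont : ∀ (u : ℕ → X) (p : X), (∀ n, u n ∈ D) → p ∈ D →
      Filter.Tendsto u Filter.atTop (nhds p) →
      Filter.Tendsto (fun n => Metric.hausdorffDist (T (u n)) (T p)) Filter.atTop (nhds 0))
    (u v : ℕ → X) (s : X) (hu : ∀ n, u n ∈ D) (hv : ∀ n, v n ∈ T (u n))
    (hus : Tendsto u atTop (𝓝 s)) (hvs : Tendsto v atTop (𝓝 s)) :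
    s ∈ D ∧ s ∈ T s := by
  have hsD : s ∈ D := hDclosed.mem_of_tendsto hus (Filter.Eventually.of_forall hu)
  have hd := hTcont u s hu hsD hus
  have h1 : ∀ n, Metric.infDist (v n) (T s) ≤ Metric.hausdorffDist (T (u n)) (T s) := by
    intro n
    have hfin : EMetric.hausdorffEdist (T (u n)) (T s) ≠ ⊤ :=
      Metric.hausdorffEdist_ne_top_of_nonempty_of_bounded (hTval _ (hu n)).1 (hTval s hsD).1
        (hTval _ (hu n)).2.2.1 (hTval s hsD).2.2.1
    have := Metric.infDist_le_infDist_add_hausdorffDist (x := v n)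
      (s := T (u n)) (t := T s) hfin
    simpa [Metric.infDist_zero_of_mem (hv n)] using this
  have h2 : Tendsto (fun n => Metric.infDist (v n) (T s)) atTop (𝓝 0) :=
    squeeze_zero (fun n => Metric.infDist_nonneg) h1 hd
  have h3 : ∀ n, Metric.infDist s (T s) ≤ Metric.infDist (v n) (T s) + dist s (v n) :=
    fun n => Metric.infDist_le_infDist_add_dist
  have h4 : Tendsto (fun n => Metric.infDist (v n) (T s) + dist s (v n)) atTop (𝓝 0) := by
    have hdist : Tendsto (fun n => dist s (v n)) atTop (𝓝 0) := by
      simpa using (tendsto_const_nhds (x := s)).dist hvs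
    simpa using h2.add hdist
  have h5 : Metric.infDist s (T s) ≤ 0 := ge_of_tendsto' h4 h3
  have h6 : Metric.infDist s (T s) = 0 := le_antisymm h5 Metric.infDist_nonneg
  have hcl : s ∈ closure (T s) := (Metric.mem_closure_iff_infDist_zero (hTval s hsD).1).mpr h6
  exact ⟨hsD, (hTval s hsD).2.1.closure_eq ▸ hcl⟩

/-- Core of chain-completeness: a nonempty chain of fixed points with an upper bound has a
least upper bound which is a fixed point. -/
lemma chainSup (K : Set X) (hKclosed : IsClosed K) (hK0 : (0 : X) ∈ K)
    (hKadd : ∀ x ∈ K, ∀ y ∈ K, x + y ∈ K)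
    {l : ℝ} (hnorm : ∀ x y : X, x ∈ K → y - x ∈ K → ‖x‖ ≤ l * ‖y‖)
    (D : Set X) (hDclosed : IsClosed D)
    (T : X → Set X)
    (hTval : ∀ x ∈ D, (T x).Nonempty ∧ IsClosed (T x) ∧ Bornology.IsBounded (T x) ∧ T x ⊆ D)
    (hTcont : ∀ (u : ℕ → X) (p : X), (∀ n, u n ∈ D) → p ∈ D →
      Filter.Tendsto u Filter.atTop (nhds p) →
      Filter.Tendsto (fun n => Metric.hausdorffDist (T (u n)) (T p)) Filter.atTop (nhds 0))
    (hTcomp : ∀ C ⊆ D, Bornology.IsBounded C → IsCompact (closure (⋃ x ∈ C, T x)))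
    (C : Set X) (hCsub : C ⊆ {x | x ∈ D ∧ x ∈ T x}) (hCne : C.Nonempty)
    (hCchain : IsChain (coneLe K) C) (b : X) (hb : ∀ c ∈ C, coneLe K c b) :
    ∃ s, (s ∈ D ∧ s ∈ T s) ∧ (∀ c ∈ C, coneLe K c s) ∧
      ∀ b', (∀ c ∈ C, coneLe K c b') → coneLe K s b' := by
  obtain ⟨c₀, hc₀⟩ := hCne
  set C' : Set X := {x ∈ C | coneLe K c₀ x} with hC'def
  have hc₀' : c₀ ∈ C' := ⟨hc₀, coneLe_refl K hK0 c₀⟩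
  have hC'sub : C' ⊆ C := fun x hx => hx.1
  have hC'D : C' ⊆ D := fun x hx => (hCsub (hC'sub hx)).1
  have hC'bdd : Bornology.IsBounded C' := by
    apply (Metric.isBounded_closedBall (x := c₀) (r := l * ‖b - c₀‖)).subset
    intro x hx
    have h1 : x - c₀ ∈ K := hx.2
    have h2 : (b - c₀) - (x - c₀) ∈ K := by
      simpa [coneLe, sub_sub_sub_cancel_right] using hb x (hC'sub hx)
    have := hnorm _ _ h1 h2
    simpa [Metric.mem_closedBall, dist_eq_norm] using this
  have hE : IsCompact (closure (⋃ x ∈ C', T x)) := hTcomp C' hC'D hC'bdd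
  have hsubU : C' ⊆ ⋃ x ∈ C', T x := fun x hx =>
    Set.mem_biUnion hx (hCsub (hC'sub hx)).2
  have hclC' : IsCompact (closure C') :=
    hE.of_isClosed_subset isClosed_closure (closure_mono hsubU)
  -- the closure of the chain is a chain
  have hchain' : ∀ p ∈ closure C', ∀ q ∈ closure C', coneLe K p q ∨ coneLe K q p := by
    intro p hp q hq
    obtain ⟨up, hup, hupt⟩ := mem_closure_iff_seq_limit.1 hp
    obtain ⟨uq, huq, huqt⟩ := mem_closure_iff_seq_limit.1 hq
    have hcomp : ∀ n, (uq n - up n ∈ K) ∨ (up n - uq n ∈ K) := by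
      intro n
      rcases eq_or_ne (up n) (uq n) with h | h
      · left; simpa [h] using hK0
      · exact hCchain (hC'sub (hup n)) (hC'sub (huq n)) h
    rcases Filter.frequently_or_distrib.1
        ((Filter.Frequently.of_forall (f := (atTop : Filter ℕ)) hcomp)) with h | h
    · exact Or.inl (hKclosed.mem_of_frequently_of_tendsto h (huqt.sub hupt))
    · exact Or.inr (hKclosed.mem_of_frequently_of_tendsto h (hupt.sub huqt))
  have hclne : (closure C').Nonempty := ⟨c₀, subset_closure hc₀'⟩
  haveI : Nonempty (closure C') := hclne.to_subtype
  set Z : closure C' → Set X := fun y => {x ∈ closure C' | coneLe K y.1 x} with hZdef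
  have hZclosed : ∀ y, IsClosed (Z y) := by
    intro y
    have h1 : IsClosed ((fun x : X => x - y.1) ⁻¹' K) :=
      hKclosed.preimage (continuous_id.sub continuous_const)
    exact isClosed_closure.inter h1
  have hZcomp : ∀ y, IsCompact (Z y) :=
    fun y => hclC'.of_isClosed_subset (hZclosed y) (fun x hx => hx.1)
  have hZne : ∀ y, (Z y).Nonempty := fun y => ⟨y.1, y.2, coneLe_refl K hK0 _⟩
  have hZdir : Directed (· ⊇ ·) Z := by
    intro y₁ y₂
    rcases hchain' y₁.1 y₁.2 y₂.1 y₂.2 with h | h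
    · exact ⟨y₂, fun x hx => ⟨hx.1, coneLe_trans K hKadd h hx.2⟩, fun x hx => hx⟩
    · exact ⟨y₁, fun x hx => hx, fun x hx => ⟨hx.1, coneLe_trans K hKadd h hx.2⟩⟩
  obtain ⟨s, hs⟩ := IsCompact.nonempty_iInter_of_directed_nonempty_isCompact_isClosed
    Z hZdir hZne hZcomp hZclosed
  have hsub' : ∀ y ∈ closure C', coneLe K y s := fun y hy => (Set.mem_iInter.1 hs ⟨y, hy⟩).2
  have hsin : s ∈ closure C' := (Set.mem_iInter.1 hs ⟨c₀, subset_closure hc₀'⟩).1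
  obtain ⟨u, hu, hut⟩ := mem_closure_iff_seq_limit.1 hsin
  have hfix := limFix D hDclosed T hTval hTcont u u s (fun n => hC'D (hu n))
    (fun n => (hCsub (hC'sub (hu n))).2) hut hut
  refine ⟨s, hfix, ?_, ?_⟩
  · intro c hc
    rcases eq_or_ne c c₀ with rfl | h
    · exact hsub' c (subset_closure hc₀')
    · rcases hCchain hc hc₀ h with h' | h'
      · exact coneLe_trans K hKadd h' (hsub' c₀ (subset_closure hc₀'))
      · exact hsub' c (subset_closure ⟨hc, h'⟩)
  · intro b' hb'
    exact hKclosed.mem_of_tendsto (tendsto_const_nhds.sub hut)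
      (Filter.Eventually.of_forall fun n => hb' (u n) (hC'sub (hu n)))

end Aux

/-- Theorem 3.6 (a), (a'): in a normal partially ordered Banach space, for an isotone,
δ-compact set-valued map `T` on a nonempty closed inductive set `D`, with nonempty closed
bounded values in `D`, and with `x₀ ∈ D`, `x₁ ∈ T x₀`, `x₀ ≼ x₁`, the fixed point set
`𝔉(T) = {x ∈ D | x ∈ T x}` is nonempty and chain-complete, and `T` has a maximal fixed point. -/
theorem setvalued_fixed_points_chainComplete_of_normal
    {X : Type*} [NormedAddCommGroup X] [NormedSpace ℝ X] [CompleteSpace X]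
    (K : Set X) (hKclosed : IsClosed K) (hK0 : (0 : X) ∈ K)
    (hKadd : ∀ x ∈ K, ∀ y ∈ K, x + y ∈ K)
    (hKsmul : ∀ c : ℝ, 0 ≤ c → ∀ x ∈ K, c • x ∈ K)
    (hKpointed : ∀ x ∈ K, -x ∈ K → x = 0)
    -- normality of the order
    (hnormal : ∃ l : ℝ, 0 < l ∧ ∀ x y : X, x ∈ K → y - x ∈ K → ‖x‖ ≤ l * ‖y‖)
    -- D is a nonempty closed inductive subset of X
    (D : Set X) (hDne : D.Nonempty) (hDclosed : IsClosed D)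
    (hDind : ∀ C ⊆ D, C.Nonempty → IsChain (coneLe K) C → ∃ b ∈ D, ∀ c ∈ C, coneLe K c b)
    -- T has nonempty closed bounded values contained in D
    (T : X → Set X)
    (hTval : ∀ x ∈ D, (T x).Nonempty ∧ IsClosed (T x) ∧ Bornology.IsBounded (T x) ∧ T x ⊆ D)
    -- T is isotone (≼-increasing upward)
    (hiso : ∀ x ∈ D, ∀ y ∈ D, coneLe K x y → ∀ z ∈ T x, ∃ w ∈ T y, coneLe K z w)
    -- T is δ-continuous
    (hTcont : ∀ (u : ℕ → X) (p : X), (∀ n, u n ∈ D) → p ∈ D →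
      Filter.Tendsto u Filter.atTop (nhds p) →
      Filter.Tendsto (fun n => Metric.hausdorffDist (T (u n)) (T p)) Filter.atTop (nhds 0))
    -- T maps bounded sets into relatively compact sets
    (hTcomp : ∀ C ⊆ D, Bornology.IsBounded C → IsCompact (closure (⋃ x ∈ C, T x)))
    -- starting points
    (x₀ : X) (hx₀ : x₀ ∈ D) (x₁ : X) (hx₁ : x₁ ∈ T x₀) (h₀₁ : coneLe K x₀ x₁) :
    ({x | x ∈ D ∧ x ∈ T x}).Nonempty ∧
    (∀ C ⊆ {x | x ∈ D ∧ x ∈ T x}, C.Nonempty → IsChain (coneLe K) C →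
      (∃ b, ∀ c ∈ C, coneLe K c b) →
      ∃ s, s ∈ {x | x ∈ D ∧ x ∈ T x} ∧ (∀ c ∈ C, coneLe K c s) ∧
        ∀ b, (∀ c ∈ C, coneLe K c b) → coneLe K s b) ∧
    (∃ m, m ∈ {x | x ∈ D ∧ x ∈ T x} ∧
      ∀ y ∈ {x | x ∈ D ∧ x ∈ T x}, coneLe K m y → m = y) := by
  obtain ⟨l, hl, hnorm⟩ := hnormal
  -- Step 1: build the increasing iteration sequence
  have hstep : ∀ p : {p : X × X // p.1 ∈ D ∧ p.2 ∈ T p.1 ∧ coneLe K p.1 p.2},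
      ∃ c, c ∈ T p.1.2 ∧ coneLe K p.1.2 c := by
    rintro ⟨⟨a, c⟩, ha, hc, hac⟩
    obtain ⟨w, hw1, hw2⟩ := hiso a ha c ((hTval a ha).2.2.2 hc) hac c hc
    exact ⟨w, hw1, hw2⟩
  let g : ℕ → {p : X × X // p.1 ∈ D ∧ p.2 ∈ T p.1 ∧ coneLe K p.1 p.2} := fun n =>
    Nat.rec ⟨(x₀, x₁), hx₀, hx₁, h₀₁⟩
      (fun _ p => ⟨(p.1.2, Classical.choose (hstep p)),
        (hTval p.1.1 p.2.1).2.2.2 p.2.2.1,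
        (Classical.choose_spec (hstep p)).1,
        (Classical.choose_spec (hstep p)).2⟩) n
  let u : ℕ → X := fun n => (g n).1.1
  have huD : ∀ n, u n ∈ D := fun n => (g n).2.1
  have huT : ∀ n, u (n + 1) ∈ T (u n) := fun n => (g n).2.2.1
  have hule : ∀ n, coneLe K (u n) (u (n + 1)) := fun n => (g n).2.2.2
  have humono : ∀ m n, m ≤ n → coneLe K (u m) (u n) := by
    intro m n h
    induction n, h using Nat.le_induction with
    | base => exact coneLe_refl K hK0 _
    | succ n hmn ih => exact coneLe_trans K hKadd ih (hule n)
  have hchain : IsChain (coneLe K) (Set.range u) := by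
    rintro _ ⟨m, rfl⟩ _ ⟨n, rfl⟩ _
    rcases le_total m n with h | h
    · exact Or.inl (humono m n h)
    · exact Or.inr (humono n m h)
  obtain ⟨bb, hbbD, hbb⟩ := hDind (Set.range u) (Set.range_subset_iff.2 huD)
    ⟨u 0, Set.mem_range_self 0⟩ hchain
  have hubdd : Bornology.IsBounded (Set.range u) := by
    apply (Metric.isBounded_closedBall (x := u 0) (r := l * ‖bb - u 0‖)).subset
    rintro _ ⟨n, rfl⟩
    have h1 : u n - u 0 ∈ K := humono 0 n (Nat.zero_le n)
    have h2 : (bb - u 0) - (u n - u 0) ∈ K := by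
      simpa [coneLe, sub_sub_sub_cancel_right] using hbb (u n) (Set.mem_range_self n)
    have := hnorm _ _ h1 h2
    simpa [Metric.mem_closedBall, dist_eq_norm] using this
  have hE : IsCompact (closure (⋃ x ∈ Set.range u, T x)) :=
    hTcomp (Set.range u) (Set.range_subset_iff.2 huD) hubdd
  have hvE : ∀ n, u (n + 1) ∈ closure (⋃ x ∈ Set.range u, T x) := fun n =>
    subset_closure (Set.mem_biUnion (Set.mem_range_self n) (huT n))
  obtain ⟨p, hpE, φ, hφ, hφt⟩ := hE.tendsto_subseq hvE
  -- the whole sequence converges to p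
  have hut : Tendsto u atTop (𝓝 p) := by
    rw [Metric.tendsto_atTop]
    intro ε hε
    have h2l : (0 : ℝ) < 2 * l + 2 := by linarith
    set ε' := ε / (2 * l + 2) with hε'def
    have hε' : 0 < ε' := by positivity
    obtain ⟨K₀, hK₀⟩ := (Metric.tendsto_atTop.1 hφt) ε' hε'
    refine ⟨φ K₀ + 1, fun n hn => ?_⟩
    set k := max K₀ n with hkdef
    have hk1 : K₀ ≤ k := le_max_left _ _
    have hkn : n ≤ φ k + 1 := le_trans (le_max_right K₀ n) (Nat.le_succ_of_le hφ.le_apply)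
    have h1 : u n - u (φ K₀ + 1) ∈ K := humono _ n hn
    have h2 : (u (φ k + 1) - u (φ K₀ + 1)) - (u n - u (φ K₀ + 1)) ∈ K := by
      simpa [coneLe, sub_sub_sub_cancel_right] using humono n (φ k + 1) hkn
    have hbound : ‖u n - u (φ K₀ + 1)‖ ≤ l * ‖u (φ k + 1) - u (φ K₀ + 1)‖ := hnorm _ _ h1 h2
    have hwk : dist (u (φ k + 1)) p < ε' := hK₀ k hk1
    have hwN : dist (u (φ K₀ + 1)) p < ε' := hK₀ K₀ le_rfl
    have htri : ‖u (φ k + 1) - u (φ K₀ + 1)‖ ≤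
        dist (u (φ k + 1)) p + dist (u (φ K₀ + 1)) p := by
      rw [← dist_eq_norm]
      exact dist_triangle_right _ _ _
    have hd1 : dist (u n) (u (φ K₀ + 1)) ≤ l * (2 * ε') := by
      rw [dist_eq_norm]
      calc ‖u n - u (φ K₀ + 1)‖ ≤ l * ‖u (φ k + 1) - u (φ K₀ + 1)‖ := hbound
        _ ≤ l * (dist (u (φ k + 1)) p + dist (u (φ K₀ + 1)) p) := by
            exact mul_le_mul_of_nonneg_left htri hl.le
        _ ≤ l * (2 * ε') := by nlinarith
    calc dist (u n) p ≤ dist (u n) (u (φ K₀ + 1)) + dist (u (φ K₀ + 1)) p :=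
          dist_triangle _ _ _
      _ ≤ l * (2 * ε') + ε' := by linarith
      _ < ε := by
          have : (2 * l + 2) * ε' = ε := by
            rw [hε'def]; field_simp
          nlinarith
  have hvt : Tendsto (fun n => u (n + 1)) atTop (𝓝 p) :=
    hut.comp (tendsto_add_atTop_nat 1)
  have hfixp : p ∈ D ∧ p ∈ T p :=
    limFix D hDclosed T hTval hTcont u (fun n => u (n + 1)) p huD huT hut hvt
  refine ⟨⟨p, hfixp⟩, ?_, ?_⟩
  · -- chain completeness
    intro C hC hCne hCchain ⟨b, hb⟩
    obtain ⟨s, hsfix, hsub, hleast⟩ := chainSup K hKclosed hK0 hKadd hnorm D hDclosed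
      T hTval hTcont hTcomp C hC hCne hCchain b hb
    exact ⟨s, hsfix, hsub, hleast⟩
  · -- maximal fixed point via Zorn
    letI : Preorder X :=
      { le := coneLe K
        le_refl := coneLe_refl K hK0
        le_trans := fun a b c => coneLe_trans K hKadd }
    have hih : ∀ c ⊆ {x | x ∈ D ∧ x ∈ T x}, IsChain (· ≤ ·) c →
        ∃ ub ∈ {x | x ∈ D ∧ x ∈ T x}, ∀ z ∈ c, z ≤ ub := by
      intro c hc hcchain
      rcases c.eq_empty_or_nonempty with rfl | hcne
      · exact ⟨p, hfixp, by simp⟩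
      · obtain ⟨bb', hbb'D, hbb'⟩ := hDind c (fun x hx => (hc hx).1) hcne hcchain
        obtain ⟨s, hsfix, hsub, _⟩ := chainSup K hKclosed hK0 hKadd hnorm D hDclosed
          T hTval hTcont hTcomp c hc hcne hcchain bb' hbb'
        exact ⟨s, hsfix, hsub⟩
    obtain ⟨m, hm⟩ := zorn_le₀ {x | x ∈ D ∧ x ∈ T x} hih
    refine ⟨m, hm.1, fun y hy hle => ?_⟩
    have hle' : coneLe K y m := hm.2 hy hle
    have h0 : y - m = 0 := hKpointed _ hle (by simpa [coneLe, neg_sub] using hle')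
    exact (sub_eq_zero.1 h0).symm
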